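/- In the network setup, let φ_i (i ∈ I) be profiles and assume I₀ᶜ := {i ∈ I : c_i ≠ 0} ≠ ∅. Fix j ∈ J and values l_j^± ∈ [0,1] satisfying f_j(l_j^±) = Σ_{i∈I} α_{i,j} f_i(L_{i,j}^±) and such that the corresponding speed c_j = (f_j(l_j⁺)−f_j(l_j⁻))/(l_j⁺−l_j⁻) is nonzero. Then l_j⁻ < l_j⁺. Moreover, the function ℓ_j(ξ) = Σ_{i∈I₀ᶜ} A_{i,j} φ_i(c_{i,j} ξ) − k_j (with c_{i,j} = c_i/c_j, A_{i,j} = α_{i,j} c_{i,j}, k_j = Σ_{i∈I₀ᶜ} A_{i,j} L_{i,j}⁻ − l_j⁻) is non-decreasing on ℝ and satisfies lim_{ξ→−∞} ℓ_j(ξ) = l_j⁻ and lim_{ξ→+∞} ℓ_j(ξ) = l_j⁺. -/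
import Mathlib


open Set Filter MeasureTheory
open scoped Topology Classical

/-- Assumption (f): `f ∈ C¹([0,1];ℝ)` is nonnegative, strictly concave, `f 0 = f 1 = 0`. -/
def FluxAssumption (f : ℝ → ℝ) : Prop :=
  ContDiffOn ℝ 1 f (Icc 0 1) ∧ StrictConcaveOn ℝ (Icc 0 1) f ∧
  (∀ x ∈ Icc (0:ℝ) 1, 0 ≤ f x) ∧ f 0 = 0 ∧ f 1 = 0

/-- Assumption (D): `D ∈ C¹([0,1];ℝ)` is nonnegative and positive on `(0,1)`. -/
def DiffAssumption (D : ℝ → ℝ) : Prop :=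
  ContDiffOn ℝ 1 D (Icc 0 1) ∧ (∀ x ∈ Icc (0:ℝ) 1, 0 ≤ D x) ∧
  (∀ x ∈ Ioo (0:ℝ) 1, 0 < D x)

/-- The wave speed `c = (f(ℓ⁺) - f(ℓ⁻))/(ℓ⁺ - ℓ⁻)`. -/
noncomputable def waveSpeed (f : ℝ → ℝ) (a b : ℝ) : ℝ := (f b - f a) / (b - a)

/-- The reduced flux `g(ρ) = f(ρ) - c ρ`. -/
noncomputable def redFlux (f : ℝ → ℝ) (a b ρ : ℝ) : ℝ := f ρ - waveSpeed f a b * ρ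

/-- A profile for data `f, D, ℓ⁻ = a, ℓ⁺ = b`: continuous, non-decreasing, with values in
`[a,b]`, limits `a` at `-∞` and `b` at `+∞`, `C²` on `I = {ξ | a < φ ξ < b}` with positive
derivative there, satisfying `D(φ) φ' = g(φ) - g(a)` on `I`. -/
def IsProfile (f D : ℝ → ℝ) (a b : ℝ) (φ : ℝ → ℝ) : Prop :=
  Continuous φ ∧ Monotone φ ∧ (∀ ξ, φ ξ ∈ Icc a b) ∧
  Tendsto φ atBot (𝓝 a) ∧ Tendsto φ atTop (𝓝 b) ∧
  ContDiffOn ℝ 2 φ {ξ | a < φ ξ ∧ φ ξ < b} ∧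
  ∀ ξ, a < φ ξ → φ ξ < b →
    0 < deriv φ ξ ∧ D (φ ξ) * deriv φ ξ = redFlux f a b (φ ξ) - redFlux f a b a

/-- Speed of road `h` given end–state functions. -/
noncomputable def spd {H : Type*} (f : H → ℝ → ℝ) (lm lp : H → ℝ) (h : H) : ℝ :=
  waveSpeed (f h) (lm h) (lp h)

/-- Reduced flux of road `h` given end–state functions. -/
noncomputable def gred {H : Type*} (f : H → ℝ → ℝ) (lm lp : H → ℝ) (h : H) (ρ : ℝ) : ℝ :=
  redFlux (f h) (lm h) (lp h) ρ

/-- The network setup: flux/diffusivity assumptions on each road, and coefficients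
`α i j ∈ (0,1]` with unit row sums. -/
def NetworkSetup {m n : ℕ} (f D : Fin m ⊕ Fin n → ℝ → ℝ) (α : Fin m → Fin n → ℝ) : Prop :=
  (∀ h, FluxAssumption (f h)) ∧ (∀ h, DiffAssumption (D h)) ∧
  (∀ i j, α i j ∈ Ioc (0:ℝ) 1) ∧ (∀ i, ∑ j, α i j = 1)

/-- Admissible end states: `0 ≤ ℓ_h⁻ < ℓ_h⁺ ≤ 1` for every road. -/
def EndStates {H : Type*} (lm lp : H → ℝ) : Prop :=
  ∀ h, 0 ≤ lm h ∧ lm h < lp h ∧ lp h ≤ 1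

/-- The coupling condition (Tool):
`c_j φ_j(c_j t) + g_j(ℓ_j⁻) = ∑_i α_{i,j} (c_i φ_i(c_i t) + g_i(ℓ_i⁻))` for all `t, j`. -/
def Tool {m n : ℕ} (f : Fin m ⊕ Fin n → ℝ → ℝ) (α : Fin m → Fin n → ℝ)
    (lm lp : Fin m ⊕ Fin n → ℝ) (φ : Fin m ⊕ Fin n → ℝ → ℝ) : Prop :=
  ∀ t : ℝ, ∀ j : Fin n,
    spd f lm lp (Sum.inr j) * φ (Sum.inr j) (spd f lm lp (Sum.inr j) * t)
      + gred f lm lp (Sum.inr j) (lm (Sum.inr j))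
    = ∑ i : Fin m, α i j *
        (spd f lm lp (Sum.inl i) * φ (Sum.inl i) (spd f lm lp (Sum.inl i) * t)
          + gred f lm lp (Sum.inl i) (lm (Sum.inl i)))

/-- A traveling wave of the network problem at profile level: a family of profiles
satisfying the coupling condition (Tool). -/
def IsTravelingWave {m n : ℕ} (f D : Fin m ⊕ Fin n → ℝ → ℝ) (α : Fin m → Fin n → ℝ)
    (lm lp : Fin m ⊕ Fin n → ℝ) (φ : Fin m ⊕ Fin n → ℝ → ℝ) : Prop :=
  (∀ h, IsProfile (f h) (D h) (lm h) (lp h) (φ h)) ∧ Tool f α lm lp φ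

/-- `L_{i,j}⁻`: `ℓ_i⁻` if `c_i c_j ≥ 0`, and `ℓ_i⁺` otherwise. -/
noncomputable def Lminus {m n : ℕ} (f : Fin m ⊕ Fin n → ℝ → ℝ)
    (lm lp : Fin m ⊕ Fin n → ℝ) (i : Fin m) (j : Fin n) : ℝ :=
  if 0 ≤ spd f lm lp (Sum.inl i) * spd f lm lp (Sum.inr j) then lm (Sum.inl i)
  else lp (Sum.inl i)

/-- `L_{i,j}⁺`: `ℓ_i⁺` if `c_i c_j ≥ 0`, and `ℓ_i⁻` otherwise. -/
noncomputable def Lplus {m n : ℕ} (f : Fin m ⊕ Fin n → ℝ → ℝ)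
    (lm lp : Fin m ⊕ Fin n → ℝ) (i : Fin m) (j : Fin n) : ℝ :=
  if 0 ≤ spd f lm lp (Sum.inl i) * spd f lm lp (Sum.inr j) then lp (Sum.inl i)
  else lm (Sum.inl i)

/-- `k_j = ∑_{i ∈ I₀ᶜ} A_{i,j} L_{i,j}⁻ - ℓ_j⁻` with `A_{i,j} = α_{i,j} c_i / c_j`. -/
noncomputable def kconst {m n : ℕ} (f : Fin m ⊕ Fin n → ℝ → ℝ) (α : Fin m → Fin n → ℝ)
    (lm lp : Fin m ⊕ Fin n → ℝ) (j : Fin n) : ℝ :=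
  (∑ i ∈ Finset.univ.filter (fun i : Fin m => spd f lm lp (Sum.inl i) ≠ 0),
      (α i j * (spd f lm lp (Sum.inl i) / spd f lm lp (Sum.inr j))) * Lminus f lm lp i j)
    - lm (Sum.inr j)

/-- Lemma on the candidate outgoing profile: `l_j⁻ < l_j⁺`, and the function
`ℓ_j(ξ) = ∑_{i ∈ I₀ᶜ} A_{i,j} φ_i(c_{i,j} ξ) - k_j` is non-decreasing with limits `l_j^∓`
at `∓∞`. -/
theorem stmt13 (m n : ℕ) (hm : 0 < m) (hn : 0 < n)
    (f D : Fin m ⊕ Fin n → ℝ → ℝ) (α : Fin m → Fin n → ℝ)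
    (hnet : NetworkSetup f D α)
    (lm lp : Fin m ⊕ Fin n → ℝ)
    (hin : ∀ i : Fin m, 0 ≤ lm (Sum.inl i) ∧ lm (Sum.inl i) < lp (Sum.inl i) ∧
      lp (Sum.inl i) ≤ 1)
    (φin : Fin m → ℝ → ℝ)
    (hφin : ∀ i : Fin m,
      IsProfile (f (Sum.inl i)) (D (Sum.inl i)) (lm (Sum.inl i)) (lp (Sum.inl i)) (φin i))
    (hI0c : ∃ i : Fin m, spd f lm lp (Sum.inl i) ≠ 0)
    (j : Fin n)
    (hlj : lm (Sum.inr j) ∈ Icc (0:ℝ) 1 ∧ lp (Sum.inr j) ∈ Icc (0:ℝ) 1)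
    (hfjm : f (Sum.inr j) (lm (Sum.inr j))
      = ∑ i : Fin m, α i j * f (Sum.inl i) (Lminus f lm lp i j))
    (hfjp : f (Sum.inr j) (lp (Sum.inr j))
      = ∑ i : Fin m, α i j * f (Sum.inl i) (Lplus f lm lp i j))
    (hcj : spd f lm lp (Sum.inr j) ≠ 0) :
    lm (Sum.inr j) < lp (Sum.inr j) ∧
    Monotone (fun ξ : ℝ =>
      (∑ i ∈ Finset.univ.filter (fun i : Fin m => spd f lm lp (Sum.inl i) ≠ 0),
        (α i j * (spd f lm lp (Sum.inl i) / spd f lm lp (Sum.inr j))) *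
          φin i ((spd f lm lp (Sum.inl i) / spd f lm lp (Sum.inr j)) * ξ))
        - kconst f α lm lp j) ∧
    Tendsto (fun ξ : ℝ =>
      (∑ i ∈ Finset.univ.filter (fun i : Fin m => spd f lm lp (Sum.inl i) ≠ 0),
        (α i j * (spd f lm lp (Sum.inl i) / spd f lm lp (Sum.inr j))) *
          φin i ((spd f lm lp (Sum.inl i) / spd f lm lp (Sum.inr j)) * ξ))
        - kconst f α lm lp j) atBot (𝓝 (lm (Sum.inr j))) ∧
    Tendsto (fun ξ : ℝ =>
      (∑ i ∈ Finset.univ.filter (fun i : Fin m => spd f lm lp (Sum.inl i) ≠ 0),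
        (α i j * (spd f lm lp (Sum.inl i) / spd f lm lp (Sum.inr j))) *
          φin i ((spd f lm lp (Sum.inl i) / spd f lm lp (Sum.inr j)) * ξ))
        - kconst f α lm lp j) atTop (𝓝 (lp (Sum.inr j))) := by
  classical
  obtain ⟨hflux, hdiff, hα, hαsum⟩ := hnet
  set S := Finset.univ.filter (fun i : Fin m => spd f lm lp (Sum.inl i) ≠ 0) with hS
  -- basic facts
  have hαpos : ∀ i : Fin m, 0 < α i j := fun i => (hα i j).1
  have hfi_mul : ∀ i : Fin m, spd f lm lp (Sum.inl i) * (lp (Sum.inl i) - lm (Sum.inl i))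
      = f (Sum.inl i) (lp (Sum.inl i)) - f (Sum.inl i) (lm (Sum.inl i)) := by
    intro i
    have h := (hin i).2.1
    simp only [spd, waveSpeed]
    rw [div_mul_cancel₀]
    exact sub_ne_zero.mpr h.ne'
  have hkey : ∀ i : Fin m, spd f lm lp (Sum.inl i) * (Lplus f lm lp i j - Lminus f lm lp i j)
      = f (Sum.inl i) (Lplus f lm lp i j) - f (Sum.inl i) (Lminus f lm lp i j) := by
    intro i
    unfold Lplus Lminus
    split_ifs with h
    · exact hfi_mul i
    · have := hfi_mul i
      nlinarith [this]
  have hne : lp (Sum.inr j) - lm (Sum.inr j) ≠ 0 := by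
    intro h0
    apply hcj
    simp only [spd, waveSpeed, h0, div_zero]
  have hcjmul : spd f lm lp (Sum.inr j) * (lp (Sum.inr j) - lm (Sum.inr j))
      = f (Sum.inr j) (lp (Sum.inr j)) - f (Sum.inr j) (lm (Sum.inr j)) := by
    simp only [spd, waveSpeed]
    rw [div_mul_cancel₀ _ hne]
  -- sign lemma
  have hsign : ∀ i : Fin m, spd f lm lp (Sum.inl i) ≠ 0 →
      (0 < spd f lm lp (Sum.inl i) / spd f lm lp (Sum.inr j) ↔
        0 ≤ spd f lm lp (Sum.inl i) * spd f lm lp (Sum.inr j)) := by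
    intro i hi
    have h1 : (0:ℝ) < spd f lm lp (Sum.inl i) / spd f lm lp (Sum.inr j) ↔
        0 < spd f lm lp (Sum.inl i) * spd f lm lp (Sum.inr j) := by
      rw [div_pos_iff, mul_pos_iff]
    rw [h1]
    constructor
    · exact le_of_lt
    · intro h
      exact lt_of_le_of_ne h (Ne.symm (mul_ne_zero hi hcj))
  -- the key identity for the jump
  have hdelta : lp (Sum.inr j) - lm (Sum.inr j)
      = ∑ i ∈ S, (α i j * (spd f lm lp (Sum.inl i) / spd f lm lp (Sum.inr j))) *
          (Lplus f lm lp i j - Lminus f lm lp i j) := by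
    have h1 : f (Sum.inr j) (lp (Sum.inr j)) - f (Sum.inr j) (lm (Sum.inr j))
        = ∑ i : Fin m, α i j * (spd f lm lp (Sum.inl i) *
            (Lplus f lm lp i j - Lminus f lm lp i j)) := by
      rw [hfjp, hfjm, ← Finset.sum_sub_distrib]
      refine Finset.sum_congr rfl fun i _ => ?_
      rw [hkey i]; ring
    have h2 : (∑ i : Fin m, α i j * (spd f lm lp (Sum.inl i) *
            (Lplus f lm lp i j - Lminus f lm lp i j)))
        = ∑ i ∈ S, α i j * (spd f lm lp (Sum.inl i) *
            (Lplus f lm lp i j - Lminus f lm lp i j)) := by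
      rw [hS]
      rw [Finset.sum_filter_of_ne]
      intro i _ hv hzero
      apply hv
      rw [hzero] at hv ⊢
      simp [zero_mul, mul_zero] at hv
    have h3 : spd f lm lp (Sum.inr j) * (lp (Sum.inr j) - lm (Sum.inr j))
        = ∑ i ∈ S, α i j * (spd f lm lp (Sum.inl i) *
            (Lplus f lm lp i j - Lminus f lm lp i j)) := by
      rw [hcjmul, h1, h2]
    have h4 : lp (Sum.inr j) - lm (Sum.inr j)
        = (∑ i ∈ S, α i j * (spd f lm lp (Sum.inl i) *
            (Lplus f lm lp i j - Lminus f lm lp i j))) / spd f lm lp (Sum.inr j) := by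
      rw [eq_div_iff hcj]
      linarith [h3]
    rw [h4, Finset.sum_div]
    refine Finset.sum_congr rfl fun i _ => ?_
    ring
  -- positivity of each term
  have hpos : ∀ i ∈ S, 0 < (α i j * (spd f lm lp (Sum.inl i) / spd f lm lp (Sum.inr j))) *
      (Lplus f lm lp i j - Lminus f lm lp i j) := by
    intro i hi
    have hci : spd f lm lp (Sum.inl i) ≠ 0 := (Finset.mem_filter.mp hi).2
    have hd : spd f lm lp (Sum.inl i) / spd f lm lp (Sum.inr j) ≠ 0 := div_ne_zero hci hcj
    by_cases h : 0 ≤ spd f lm lp (Sum.inl i) * spd f lm lp (Sum.inr j)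
    · have hdpos : 0 < spd f lm lp (Sum.inl i) / spd f lm lp (Sum.inr j) :=
        (hsign i hci).mpr h
      have hLL : Lplus f lm lp i j - Lminus f lm lp i j
          = lp (Sum.inl i) - lm (Sum.inl i) := by
        unfold Lplus Lminus; rw [if_pos h, if_pos h]
      rw [hLL]
      exact mul_pos (mul_pos (hαpos i) hdpos) (sub_pos.mpr (hin i).2.1)
    · have hdneg : spd f lm lp (Sum.inl i) / spd f lm lp (Sum.inr j) < 0 := by
        rcases hd.lt_or_gt with h' | h'
        · exact h'
        · exact absurd ((hsign i hci).mp h') h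
      have hLL : Lplus f lm lp i j - Lminus f lm lp i j
          = lm (Sum.inl i) - lp (Sum.inl i) := by
        unfold Lplus Lminus; rw [if_neg h, if_neg h]
      rw [hLL]
      exact mul_pos_of_neg_of_neg (mul_neg_of_pos_of_neg (hαpos i) hdneg)
        (sub_neg.mpr (hin i).2.1)
  have hSne : S.Nonempty := by
    obtain ⟨i, hi⟩ := hI0c
    exact ⟨i, Finset.mem_filter.mpr ⟨Finset.mem_univ i, hi⟩⟩
  have hlt : lm (Sum.inr j) < lp (Sum.inr j) := by
    have := Finset.sum_pos hpos hSne
    rw [← hdelta] at this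
    linarith
  -- monotonicity of each term
  have hmono : ∀ i ∈ S, Monotone (fun ξ : ℝ =>
      (α i j * (spd f lm lp (Sum.inl i) / spd f lm lp (Sum.inr j))) *
        φin i ((spd f lm lp (Sum.inl i) / spd f lm lp (Sum.inr j)) * ξ)) := by
    intro i hi
    have hφm : Monotone (φin i) := (hφin i).2.1
    rcases le_or_gt 0 (spd f lm lp (Sum.inl i) / spd f lm lp (Sum.inr j)) with hd | hd
    · intro x y hxy
      have := hφm (mul_le_mul_of_nonneg_left hxy hd)
      exact mul_le_mul_of_nonneg_left this (mul_nonneg (hαpos i).le hd)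
    · intro x y hxy
      have h1 : (spd f lm lp (Sum.inl i) / spd f lm lp (Sum.inr j)) * y
          ≤ (spd f lm lp (Sum.inl i) / spd f lm lp (Sum.inr j)) * x :=
        mul_le_mul_of_nonpos_left hxy hd.le
      have h2 := hφm h1
      have hA : α i j * (spd f lm lp (Sum.inl i) / spd f lm lp (Sum.inr j)) ≤ 0 :=
        (mul_neg_of_pos_of_neg (hαpos i) hd).le
      exact mul_le_mul_of_nonpos_left h2 hA
  -- limits of each term
  have hL_bot : ∀ i ∈ S, Tendsto (fun ξ : ℝ =>
      (α i j * (spd f lm lp (Sum.inl i) / spd f lm lp (Sum.inr j))) *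
        φin i ((spd f lm lp (Sum.inl i) / spd f lm lp (Sum.inr j)) * ξ)) atBot
      (𝓝 ((α i j * (spd f lm lp (Sum.inl i) / spd f lm lp (Sum.inr j))) *
        Lminus f lm lp i j)) := by
    intro i hi
    have hci : spd f lm lp (Sum.inl i) ≠ 0 := (Finset.mem_filter.mp hi).2
    have hd : spd f lm lp (Sum.inl i) / spd f lm lp (Sum.inr j) ≠ 0 := div_ne_zero hci hcj
    rcases hd.lt_or_gt with hdneg | hdpos
    · have hLm : Lminus f lm lp i j = lp (Sum.inl i) := by
        unfold Lminus
        rw [if_neg]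
        intro h
        exact absurd ((hsign i hci).mpr h) (not_lt.mpr hdneg.le)
      rw [hLm]
      have hmap : Tendsto (fun ξ : ℝ =>
          (spd f lm lp (Sum.inl i) / spd f lm lp (Sum.inr j)) * ξ) atBot atTop := by
        exact Tendsto.const_mul_atBot_of_neg hdneg tendsto_id
      exact (((hφin i).2.2.2.2.1).comp hmap).const_mul _
    · have hLm : Lminus f lm lp i j = lm (Sum.inl i) := by
        unfold Lminus
        rw [if_pos ((hsign i hci).mp hdpos)]
      rw [hLm]
      have hmap : Tendsto (fun ξ : ℝ =>
          (spd f lm lp (Sum.inl i) / spd f lm lp (Sum.inr j)) * ξ) atBot atBot := by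
        exact Tendsto.const_mul_atBot hdpos tendsto_id
      exact (((hφin i).2.2.2.1).comp hmap).const_mul _
  have hL_top : ∀ i ∈ S, Tendsto (fun ξ : ℝ =>
      (α i j * (spd f lm lp (Sum.inl i) / spd f lm lp (Sum.inr j))) *
        φin i ((spd f lm lp (Sum.inl i) / spd f lm lp (Sum.inr j)) * ξ)) atTop
      (𝓝 ((α i j * (spd f lm lp (Sum.inl i) / spd f lm lp (Sum.inr j))) *
        Lplus f lm lp i j)) := by
    intro i hi
    have hci : spd f lm lp (Sum.inl i) ≠ 0 := (Finset.mem_filter.mp hi).2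
    have hd : spd f lm lp (Sum.inl i) / spd f lm lp (Sum.inr j) ≠ 0 := div_ne_zero hci hcj
    rcases hd.lt_or_gt with hdneg | hdpos
    · have hLp : Lplus f lm lp i j = lm (Sum.inl i) := by
        unfold Lplus
        rw [if_neg]
        intro h
        exact absurd ((hsign i hci).mpr h) (not_lt.mpr hdneg.le)
      rw [hLp]
      have hmap : Tendsto (fun ξ : ℝ =>
          (spd f lm lp (Sum.inl i) / spd f lm lp (Sum.inr j)) * ξ) atTop atBot := by
        exact Tendsto.const_mul_atTop_of_neg hdneg tendsto_id
      exact (((hφin i).2.2.2.1).comp hmap).const_mul _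
    · have hLp : Lplus f lm lp i j = lp (Sum.inl i) := by
        unfold Lplus
        rw [if_pos ((hsign i hci).mp hdpos)]
      rw [hLp]
      have hmap : Tendsto (fun ξ : ℝ =>
          (spd f lm lp (Sum.inl i) / spd f lm lp (Sum.inr j)) * ξ) atTop atTop := by
        exact Tendsto.const_mul_atTop hdpos tendsto_id
      exact (((hφin i).2.2.2.2.1).comp hmap).const_mul _
  refine ⟨hlt, ?_, ?_, ?_⟩
  · -- monotonicity
    intro x y hxy
    simp only
    have := Finset.sum_le_sum (fun i hi => hmono i hi hxy)
    exact sub_le_sub_right this _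
  · -- limit at -∞
    have hsum := tendsto_finset_sum S hL_bot
    have h := hsum.sub_const (kconst f α lm lp j)
    have hval : (∑ i ∈ S, (α i j * (spd f lm lp (Sum.inl i) / spd f lm lp (Sum.inr j))) *
        Lminus f lm lp i j) - kconst f α lm lp j = lm (Sum.inr j) := by
      unfold kconst
      rw [← hS]
      ring
    rwa [hval] at h
  · -- limit at +∞
    have hsum := tendsto_finset_sum S hL_top
    have h := hsum.sub_const (kconst f α lm lp j)
    have hval : (∑ i ∈ S, (α i j * (spd f lm lp (Sum.inl i) / spd f lm lp (Sum.inr j))) *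
        Lplus f lm lp i j) - kconst f α lm lp j = lp (Sum.inr j) := by
      unfold kconst
      rw [← hS]
      have hsplit : (∑ i ∈ S, (α i j * (spd f lm lp (Sum.inl i) / spd f lm lp (Sum.inr j))) *
          Lplus f lm lp i j) - (∑ i ∈ S, (α i j * (spd f lm lp (Sum.inl i) /
            spd f lm lp (Sum.inr j))) * Lminus f lm lp i j)
          = lp (Sum.inr j) - lm (Sum.inr j) := by
        rw [← Finset.sum_sub_distrib, hdelta]
        exact Finset.sum_congr rfl fun i _ => by ring
      linarith
    rwa [hval] at h
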